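/- Let (a,b) ⊂ ℝ be a bounded interval and v ∈ H¹(a,b). Then the Aronszajn–Slobodeckij seminorm satisfies |v|_{H^{1/2}(a,b)} ≤ C ‖v‖_{L²(a,b)}^{1/2} ‖v'‖_{L²(a,b)}^{1/2} for a constant C independent of the interval (a,b) and of v. -/

import Mathlib

open MeasureTheory Set
open scoped ENNReal NNReal

lemma rpow_two_real (t : ℝ) : t ^ (2:ℝ) = t^2 := by
  rw [show (2:ℝ) = ((2:ℕ):ℝ) by norm_num, Real.rpow_natCast]

/-- rpow form of inverse square, for positive base -/
lemma inv_sq_eq_rpow {t : ℝ} (ht : 0 < t) : ((t)^2)⁻¹ = t ^ (-2:ℝ) := by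
  rw [show (-2:ℝ) = -(2:ℝ) by norm_num, Real.rpow_neg ht.le, rpow_two_real]

lemma kern_left (δ : ℝ) (hδ : 0 < δ) (c d e : ℝ) :
    (∫⁻ t in Set.Ioc c d, (if δ < e - t then ENNReal.ofReal (((e - t)^2)⁻¹) else 0)) ≤
      ENNReal.ofReal (1/δ) := by
  have h1 : ∀ t : ℝ, (if δ < e - t then ENNReal.ofReal (((e - t)^2)⁻¹) else 0) ≤
      (Set.Iio (e - δ)).indicator (fun t => ENNReal.ofReal (((e - t)^2)⁻¹)) t := by
    intro t
    by_cases h : δ < e - t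
    · have : t ∈ Set.Iio (e - δ) := by simp only [Set.mem_Iio]; linarith
      simp [h, Set.indicator_of_mem this]
    · simp [h]
  calc ∫⁻ t in Set.Ioc c d, (if δ < e - t then ENNReal.ofReal (((e - t)^2)⁻¹) else 0)
      ≤ ∫⁻ t in Set.Ioc c d, (Set.Iio (e - δ)).indicator
          (fun t => ENNReal.ofReal (((e - t)^2)⁻¹)) t := lintegral_mono h1
    _ = ∫⁻ t in Set.Iio (e - δ) ∩ Set.Ioc c d, ENNReal.ofReal (((e - t)^2)⁻¹) := by
        rw [lintegral_indicator measurableSet_Iio, Measure.restrict_restrict measurableSet_Iio]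
    _ ≤ ∫⁻ t in Set.Ioc c (e - δ), ENNReal.ofReal (((e - t)^2)⁻¹) := by
        apply lintegral_mono_set
        rintro t ⟨h2, ⟨h1, _⟩⟩
        exact ⟨h1, le_of_lt h2⟩
    _ ≤ ENNReal.ofReal (1/δ) := by
        by_cases hc : c < e - δ
        · have hcong : ∫⁻ t in Set.Ioc c (e - δ), ENNReal.ofReal (((e - t)^2)⁻¹) =
              ∫⁻ t in Set.Ioc c (e - δ), ENNReal.ofReal ((e - t) ^ (-2:ℝ)) := by
            apply setLIntegral_congr_fun measurableSet_Ioc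
            intro t ht; beta_reduce
            rw [inv_sq_eq_rpow (by rcases ht with ⟨_, h2⟩; linarith)]
          rw [hcong]
          have hint : IntervalIntegrable (fun t => (e - t) ^ (-2:ℝ)) volume c (e - δ) := by
            have h0 : IntervalIntegrable (fun x : ℝ => x ^ (-2:ℝ)) volume δ (e - c) := by
              apply intervalIntegral.intervalIntegrable_rpow
              right
              rw [Set.uIcc_of_le (by linarith)]
              rintro ⟨h1, _⟩; linarith
            have := h0.comp_sub_left e
            simpa using this.symm
          have hIcc : IntegrableOn (fun t => (e - t) ^ (-2:ℝ)) (Set.Ioc c (e - δ)) volume :=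
            (intervalIntegrable_iff_integrableOn_Ioc_of_le (by linarith)).mp hint
          rw [← ofReal_integral_eq_lintegral_ofReal hIcc]
          · apply ENNReal.ofReal_le_ofReal
            rw [← intervalIntegral.integral_of_le (by linarith : c ≤ e - δ)]
            rw [intervalIntegral.integral_comp_sub_left (fun x : ℝ => x ^ (-2:ℝ)) e]
            have h4 : e - (e - δ) = δ := by ring
            rw [h4]
            rw [integral_rpow (Or.inr ⟨by norm_num, by
              rw [Set.uIcc_of_le (by linarith)]; rintro ⟨h1, _⟩; linarith⟩)]
            have h2 : (e - c) ^ (-2 + 1 : ℝ) = (e - c)⁻¹ := by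
              norm_num [Real.rpow_neg_one]
            have h3 : (δ:ℝ) ^ (-2 + 1 : ℝ) = δ⁻¹ := by
              norm_num [Real.rpow_neg_one]
            rw [h2, h3]
            have h5 : 0 ≤ (e - c)⁻¹ := inv_nonneg.mpr (by linarith)
            rw [one_div]
            have h6 : ((e - c)⁻¹ - δ⁻¹) / (-2 + 1 : ℝ) = δ⁻¹ - (e - c)⁻¹ := by ring
            rw [h6]; linarith
          · filter_upwards [ae_restrict_mem measurableSet_Ioc] with t ht
            have : (0:ℝ) < e - t := by rcases ht with ⟨_, h2⟩; linarith
            positivity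
        · have : Set.Ioc c (e - δ) = ∅ := Set.Ioc_eq_empty (by linarith)
          simp [this]

lemma kern_right (δ : ℝ) (hδ : 0 < δ) (c d e : ℝ) :
    (∫⁻ t in Set.Ioc c d, (if δ < t - e then ENNReal.ofReal (((t - e)^2)⁻¹) else 0)) ≤
      ENNReal.ofReal (1/δ) := by
  have h1 : ∀ t : ℝ, (if δ < t - e then ENNReal.ofReal (((t - e)^2)⁻¹) else 0) ≤
      (Set.Ioi (e + δ)).indicator (fun t => ENNReal.ofReal (((t - e)^2)⁻¹)) t := by
    intro t
    by_cases h : δ < t - e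
    · have : t ∈ Set.Ioi (e + δ) := by simp only [Set.mem_Ioi]; linarith
      simp [h, Set.indicator_of_mem this]
    · simp [h]
  calc ∫⁻ t in Set.Ioc c d, (if δ < t - e then ENNReal.ofReal (((t - e)^2)⁻¹) else 0)
      ≤ ∫⁻ t in Set.Ioc c d, (Set.Ioi (e + δ)).indicator
          (fun t => ENNReal.ofReal (((t - e)^2)⁻¹)) t := lintegral_mono h1
    _ = ∫⁻ t in Set.Ioi (e + δ) ∩ Set.Ioc c d, ENNReal.ofReal (((t - e)^2)⁻¹) := by
        rw [lintegral_indicator measurableSet_Ioi, Measure.restrict_restrict measurableSet_Ioi]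
    _ ≤ ∫⁻ t in Set.Ioc (e + δ) d, ENNReal.ofReal (((t - e)^2)⁻¹) := by
        apply lintegral_mono_set
        rintro t ⟨h2, ⟨_, h3⟩⟩
        exact ⟨h2, h3⟩
    _ ≤ ENNReal.ofReal (1/δ) := by
        by_cases hc : e + δ < d
        · have hcong : ∫⁻ t in Set.Ioc (e + δ) d, ENNReal.ofReal (((t - e)^2)⁻¹) =
              ∫⁻ t in Set.Ioc (e + δ) d, ENNReal.ofReal ((t - e) ^ (-2:ℝ)) := by
            apply setLIntegral_congr_fun measurableSet_Ioc
            intro t ht; beta_reduce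
            rw [inv_sq_eq_rpow (by rcases ht with ⟨h2, _⟩; linarith)]
          rw [hcong]
          have hint : IntervalIntegrable (fun t => (t - e) ^ (-2:ℝ)) volume (e + δ) d := by
            have h0 : IntervalIntegrable (fun x : ℝ => x ^ (-2:ℝ)) volume δ (d - e) := by
              apply intervalIntegral.intervalIntegrable_rpow
              right
              rw [Set.uIcc_of_le (by linarith)]
              rintro ⟨h1, _⟩; linarith
            have := h0.comp_sub_right e
            simpa [show δ + e = e + δ by ring, show d - e + e = d by ring] using this
          have hIcc : IntegrableOn (fun t => (t - e) ^ (-2:ℝ)) (Set.Ioc (e + δ) d) volume :=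
            (intervalIntegrable_iff_integrableOn_Ioc_of_le (by linarith)).mp hint
          rw [← ofReal_integral_eq_lintegral_ofReal hIcc]
          · apply ENNReal.ofReal_le_ofReal
            rw [← intervalIntegral.integral_of_le (by linarith : e + δ ≤ d)]
            rw [intervalIntegral.integral_comp_sub_right (fun x : ℝ => x ^ (-2:ℝ)) e]
            have h4 : e + δ - e = δ := by ring
            rw [h4]
            rw [integral_rpow (Or.inr ⟨by norm_num, by
              rw [Set.uIcc_of_le (by linarith)]; rintro ⟨h1, _⟩; linarith⟩)]
            have h2 : (d - e) ^ (-2 + 1 : ℝ) = (d - e)⁻¹ := by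
              norm_num [Real.rpow_neg_one]
            have h3 : (δ:ℝ) ^ (-2 + 1 : ℝ) = δ⁻¹ := by
              norm_num [Real.rpow_neg_one]
            rw [h2, h3]
            have h5 : 0 ≤ (d - e)⁻¹ := inv_nonneg.mpr (by linarith)
            rw [one_div]
            have h6 : ((d - e)⁻¹ - δ⁻¹) / (-2 + 1 : ℝ) = δ⁻¹ - (d - e)⁻¹ := by ring
            rw [h6]; linarith
          · filter_upwards [ae_restrict_mem measurableSet_Ioc] with t ht
            have : (0:ℝ) < t - e := by rcases ht with ⟨h2, _⟩; linarith
            positivity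
        · have : Set.Ioc (e + δ) d = ∅ := Set.Ioc_eq_empty (by linarith)
          simp [this]

lemma zero_not_mem_uIcc {p q : ℝ} (hp : 0 < p) (hq : 0 < q) : (0:ℝ) ∉ Set.uIcc p q := by
  rw [Set.mem_uIcc]; rintro (⟨h1, h2⟩ | ⟨h1, h2⟩) <;> linarith

lemma nearY (x s δ : ℝ) (hδ : 0 < δ) (hs : s < x) :
    ∫⁻ y in Set.Ico (x - δ) s, ENNReal.ofReal (2 * (x - y) ^ (-(3:ℝ)/2)) ≤
      ENNReal.ofReal (4 * (x - s) ^ (-(1:ℝ)/2)) := by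
  by_cases hc : x - δ < s
  · have hxs : (0:ℝ) < x - s := by linarith
    have hIoc : ∫⁻ y in Set.Ico (x - δ) s, ENNReal.ofReal (2 * (x - y) ^ (-(3:ℝ)/2)) =
        ∫⁻ y in Set.Ioc (x - δ) s, ENNReal.ofReal (2 * (x - y) ^ (-(3:ℝ)/2)) :=
      setLIntegral_congr Ico_ae_eq_Ioc
    rw [hIoc]
    have hint : IntervalIntegrable (fun y => 2 * (x - y) ^ (-(3:ℝ)/2)) volume (x - δ) s := by
      have h0 : IntervalIntegrable (fun t : ℝ => t ^ (-(3:ℝ)/2)) volume δ (x - s) :=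
        intervalIntegral.intervalIntegrable_rpow (Or.inr (zero_not_mem_uIcc hδ hxs))
      have := (h0.comp_sub_left x).const_mul 2
      simpa using this
    have hIcc : IntegrableOn (fun y => 2 * (x - y) ^ (-(3:ℝ)/2)) (Set.Ioc (x - δ) s) volume :=
      (intervalIntegrable_iff_integrableOn_Ioc_of_le (by linarith)).mp hint
    rw [← ofReal_integral_eq_lintegral_ofReal hIcc]
    · apply ENNReal.ofReal_le_ofReal
      rw [← intervalIntegral.integral_of_le (by linarith : x - δ ≤ s)]
      rw [intervalIntegral.integral_const_mul]
      rw [intervalIntegral.integral_comp_sub_left (fun t : ℝ => t ^ (-(3:ℝ)/2)) x]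
      have h4 : x - (x - δ) = δ := by ring
      rw [h4]
      rw [integral_rpow (Or.inr ⟨by norm_num, zero_not_mem_uIcc hxs hδ⟩)]
      have he : (-(3:ℝ)/2 + 1) = -(1:ℝ)/2 := by norm_num
      rw [he]
      have h7 : 2*((δ^(-(1:ℝ)/2) - (x-s)^(-(1:ℝ)/2))/(-(1:ℝ)/2)) =
          4*(x-s)^(-(1:ℝ)/2) - 4*δ^(-(1:ℝ)/2) := by ring
      rw [h7]
      linarith [Real.rpow_nonneg hδ.le (-(1:ℝ)/2)]
    · filter_upwards [ae_restrict_mem measurableSet_Ioc] with t ht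
      have : (0:ℝ) < x - t := by rcases ht with ⟨_, h2⟩; linarith
      positivity
  · have : Set.Ico (x - δ) s = ∅ := Set.Ico_eq_empty (by linarith)
    simp [this]

lemma sq_sqrt_mul_sqrt (P Q : ℝ≥0∞) : (P ^ ((1:ℝ)/2) * Q ^ ((1:ℝ)/2))^2 = P * Q := by
  rw [mul_pow, ← ENNReal.rpow_natCast (P ^ ((1:ℝ)/2)) 2, ← ENNReal.rpow_natCast (Q ^ ((1:ℝ)/2)) 2,
    ← ENNReal.rpow_mul, ← ENNReal.rpow_mul]
  norm_num

lemma ptwise (w : ℝ → ℝ) (hw : Continuous w) {x y : ℝ} (hxy : y < x) :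
    ENNReal.ofReal ((∫ s in y..x, w s)^2 / |x - y|^2) ≤
      ENNReal.ofReal (2 * (x - y) ^ (-(3:ℝ)/2)) *
        ∫⁻ s in Set.Ioo y x, ENNReal.ofReal ((x - s) ^ ((1:ℝ)/2) * (w s)^2) := by
  have hxy0 : (0:ℝ) < x - y := by linarith
  set c := ∫ s in y..x, w s with hc
  set d := ∫ s in y..x, |w s| with hdd
  have hd0 : 0 ≤ d := intervalIntegral.integral_nonneg hxy.le (fun s _ => abs_nonneg _)
  have hcd : c^2 ≤ d^2 := by
    rw [← sq_abs c]
    have := intervalIntegral.abs_integral_le_integral_abs (f := w) (μ := volume) hxy.le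
    exact pow_le_pow_left₀ (abs_nonneg c) this 2
  -- d as a lintegral
  have hwint : IntegrableOn (fun s => |w s|) (Set.Ioo y x) volume :=
    (hw.abs.integrableOn_Ioc).mono_set Set.Ioo_subset_Ioc_self
  have hd : ENNReal.ofReal d = ∫⁻ s in Set.Ioo y x, ENNReal.ofReal |w s| := by
    rw [hdd, intervalIntegral.integral_of_le hxy.le, integral_Ioc_eq_integral_Ioo]
    exact ofReal_integral_eq_lintegral_ofReal hwint
      (Filter.Eventually.of_forall fun s => abs_nonneg _)
  -- Hölder
  set f : ℝ → ℝ≥0∞ := fun s => ENNReal.ofReal ((x - s) ^ (-(1:ℝ)/4)) with hf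
  set g : ℝ → ℝ≥0∞ := fun s => ENNReal.ofReal ((x - s) ^ ((1:ℝ)/4) * |w s|) with hg
  have hfm : Measurable f := by fun_prop
  have hgm : Measurable g := by fun_prop
  have hfg : ∫⁻ s in Set.Ioo y x, ENNReal.ofReal |w s| =
      ∫⁻ s in Set.Ioo y x, (f * g) s := by
    apply setLIntegral_congr_fun measurableSet_Ioo
    intro s hs
    have hxs : (0:ℝ) < x - s := by linarith [hs.2]
    simp only [Pi.mul_apply, hf, hg]
    rw [← ENNReal.ofReal_mul (Real.rpow_nonneg hxs.le _)]
    congr 1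
    rw [← mul_assoc, ← Real.rpow_add hxs]
    norm_num
  have hconj : Real.HolderConjugate 2 2 := by rw [Real.holderConjugate_iff]; norm_num
  have H := ENNReal.lintegral_mul_le_Lp_mul_Lq (volume.restrict (Set.Ioo y x)) hconj
    hfm.aemeasurable hgm.aemeasurable
  -- compute ∫⁻ f ^ 2
  have hf2 : (∫⁻ s in Set.Ioo y x, f s ^ (2:ℝ)) = ENNReal.ofReal (2 * (x - y) ^ ((1:ℝ)/2)) := by
    have hcong : (∫⁻ s in Set.Ioo y x, f s ^ (2:ℝ)) =
        ∫⁻ s in Set.Ioo y x, ENNReal.ofReal ((x - s) ^ (-(1:ℝ)/2)) := by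
      apply setLIntegral_congr_fun measurableSet_Ioo
      intro s hs; beta_reduce
      have hxs : (0:ℝ) ≤ x - s := by linarith [hs.2]
      rw [hf, ENNReal.ofReal_rpow_of_nonneg (Real.rpow_nonneg hxs _) (by norm_num),
        ← Real.rpow_mul hxs]
      norm_num
    rw [hcong]
    have hint : IntervalIntegrable (fun s => (x - s) ^ (-(1:ℝ)/2)) volume y x := by
      have h0 : IntervalIntegrable (fun t : ℝ => t ^ (-(1:ℝ)/2)) volume 0 (x - y) :=
        intervalIntegral.intervalIntegrable_rpow' (by norm_num)
      have := h0.comp_sub_left x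
      simpa using this.symm
    have hIcc : IntegrableOn (fun s => (x - s) ^ (-(1:ℝ)/2)) (Set.Ioo y x) volume :=
      ((intervalIntegrable_iff_integrableOn_Ioc_of_le hxy.le).mp hint).mono_set
        Set.Ioo_subset_Ioc_self
    rw [← ofReal_integral_eq_lintegral_ofReal hIcc]
    · congr 1
      rw [← integral_Ioc_eq_integral_Ioo, ← intervalIntegral.integral_of_le hxy.le]
      rw [intervalIntegral.integral_comp_sub_left (fun t : ℝ => t ^ (-(1:ℝ)/2)) x]
      have h4 : x - x = (0:ℝ) := by ring
      rw [h4]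
      rw [integral_rpow (Or.inl (by norm_num))]
      rw [Real.zero_rpow (by norm_num : (-(1:ℝ)/2 + 1) ≠ 0)]
      norm_num
      ring
    · filter_upwards [ae_restrict_mem measurableSet_Ioo] with s hs
      have hxs : (0:ℝ) < x - s := by linarith [hs.2]
      positivity
  -- compute ∫⁻ g ^ 2
  have hg2 : (∫⁻ s in Set.Ioo y x, g s ^ (2:ℝ)) =
      ∫⁻ s in Set.Ioo y x, ENNReal.ofReal ((x - s) ^ ((1:ℝ)/2) * (w s)^2) := by
    apply setLIntegral_congr_fun measurableSet_Ioo
    intro s hs; beta_reduce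
    have hxs : (0:ℝ) ≤ x - s := by linarith [hs.2]
    rw [hg, ENNReal.ofReal_rpow_of_nonneg (by positivity) (by norm_num)]
    congr 1
    rw [rpow_two_real, mul_pow, sq_abs, ← rpow_two_real ((x - s) ^ ((1:ℝ)/4)),
      ← Real.rpow_mul hxs]
    norm_num
  -- assemble
  have key : ENNReal.ofReal d ≤ (ENNReal.ofReal (2 * (x - y) ^ ((1:ℝ)/2))) ^ ((1:ℝ)/2) *
      (∫⁻ s in Set.Ioo y x, ENNReal.ofReal ((x - s) ^ ((1:ℝ)/2) * (w s)^2)) ^ ((1:ℝ)/2) := by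
    rw [hd, hfg, ← hf2, ← hg2]
    exact H
  calc ENNReal.ofReal (c^2 / |x - y|^2)
      = ENNReal.ofReal (c^2) * ENNReal.ofReal (((x - y)^2)⁻¹) := by
        rw [div_eq_mul_inv, sq_abs, ENNReal.ofReal_mul (sq_nonneg c)]
    _ ≤ ENNReal.ofReal (d^2) * ENNReal.ofReal (((x - y)^2)⁻¹) := by
        exact mul_le_mul_left (ENNReal.ofReal_le_ofReal hcd) _
    _ = (ENNReal.ofReal d)^2 * ENNReal.ofReal (((x - y)^2)⁻¹) := by
        rw [ENNReal.ofReal_pow hd0]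
    _ ≤ (ENNReal.ofReal (2 * (x - y) ^ ((1:ℝ)/2)) *
          (∫⁻ s in Set.Ioo y x, ENNReal.ofReal ((x - s) ^ ((1:ℝ)/2) * (w s)^2))) *
        ENNReal.ofReal (((x - y)^2)⁻¹) := by
        apply mul_le_mul_left
        calc (ENNReal.ofReal d)^2 ≤ ((ENNReal.ofReal (2 * (x - y) ^ ((1:ℝ)/2))) ^ ((1:ℝ)/2) *
              (∫⁻ s in Set.Ioo y x, ENNReal.ofReal ((x - s) ^ ((1:ℝ)/2) * (w s)^2)) ^ ((1:ℝ)/2))^2 :=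
              pow_le_pow_left' key 2
          _ = _ := sq_sqrt_mul_sqrt _ _
    _ = ENNReal.ofReal (2 * (x - y) ^ (-(3:ℝ)/2)) *
        ∫⁻ s in Set.Ioo y x, ENNReal.ofReal ((x - s) ^ ((1:ℝ)/2) * (w s)^2) := by
        rw [mul_comm, ← mul_assoc, ← ENNReal.ofReal_mul (by positivity)]
        congr 2
        rw [inv_sq_eq_rpow hxy0, ← mul_assoc, mul_comm ((x-y) ^ (-2:ℝ)) 2, mul_assoc,
          ← Real.rpow_add hxy0]
        norm_num

lemma master (a b : ℝ) (hab : a < b) (u w : ℝ → ℝ) (hu : Continuous u) (hw : Continuous w)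
    (hftc : ∀ x ∈ Set.Icc a b, ∀ y ∈ Set.Icc a b, u x - u y = ∫ s in y..x, w s)
    (δ : ℝ) (hδ : 0 < δ) :
    (∫ x in a..b, ∫ y in a..b, (u x - u y)^2 / |x - y|^2) ≤
      8*δ*(∫ x in a..b, (w x)^2) + (8/δ)*(∫ x in a..b, (u x)^2) := by
  set T : Set ℝ := Set.Ioc a b with hT
  set A : ℝ := ∫ x in a..b, (u x)^2 with hA
  set B : ℝ := ∫ x in a..b, (w x)^2 with hB
  have hA0 : 0 ≤ A := intervalIntegral.integral_nonneg hab.le (fun x _ => sq_nonneg _)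
  have hB0 : 0 ≤ B := intervalIntegral.integral_nonneg hab.le (fun x _ => sq_nonneg _)
  set F : ℝ → ℝ → ℝ≥0∞ := fun x y => ENNReal.ofReal ((u x - u y)^2 / |x - y|^2) with hF
  have hFm : Measurable (Function.uncurry F) := by simp only [hF]; unfold Function.uncurry; fun_prop
  set U : ℝ → ℝ≥0∞ := fun t => ENNReal.ofReal ((u t)^2) with hU
  set G : ℝ → ℝ≥0∞ := fun t => ENNReal.ofReal ((w t)^2) with hG
  have hUm : Measurable U := by fun_prop
  have hGm : Measurable G := by fun_prop
  set A' : ℝ≥0∞ := ∫⁻ t in T, U t with hA'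
  set B' : ℝ≥0∞ := ∫⁻ t in T, G t with hB'
  have hA'' : A' = ENNReal.ofReal A := by
    rw [hA', hA, intervalIntegral.integral_of_le hab.le]
    exact (ofReal_integral_eq_lintegral_ofReal ((hu.pow 2).integrableOn_Ioc)
      (Filter.Eventually.of_forall fun t => sq_nonneg _)).symm
  have hB'' : B' = ENNReal.ofReal B := by
    rw [hB', hB, intervalIntegral.integral_of_le hab.le]
    exact (ofReal_integral_eq_lintegral_ofReal ((hw.pow 2).integrableOn_Ioc)
      (Filter.Eventually.of_forall fun t => sq_nonneg _)).symm
  obtain ⟨M, hM⟩ := isCompact_Icc.exists_bound_of_continuousOn (hw.continuousOn (s := Set.Icc a b))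
  have hM0 : 0 ≤ M := le_trans (norm_nonneg (w a)) (hM a ⟨le_refl a, hab.le⟩)
  have hLip : ∀ x ∈ Set.Icc a b, ∀ y ∈ Set.Icc a b, |u x - u y| ≤ M * |x - y| := by
    intro x hx y hy
    rw [hftc x hx y hy]
    have hb : ∀ s ∈ Set.uIoc y x, ‖w s‖ ≤ M := by
      intro s hs
      rcases hs with ⟨h1, h2⟩
      exact hM s ⟨le_trans (le_min hy.1 hx.1) h1.le, le_trans h2 (max_le hy.2 hx.2)⟩
    have := intervalIntegral.norm_integral_le_of_norm_le_const hb
    simpa [Real.norm_eq_abs, abs_sub_comm] using this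
  have hFbd : ∀ x ∈ Set.Icc a b, ∀ y ∈ Set.Icc a b, F x y ≤ ENNReal.ofReal (M^2) := by
    intro x hx y hy
    apply ENNReal.ofReal_le_ofReal
    by_cases hxy : x = y
    · subst hxy; simp; positivity
    · have habs : (0:ℝ) < |x - y| := abs_pos.mpr (sub_ne_zero.mpr hxy)
      rw [div_le_iff₀ (by positivity)]
      have h1 : |u x - u y|^2 ≤ (M * |x - y|)^2 :=
        pow_le_pow_left₀ (abs_nonneg _) (hLip x hx y hy) 2
      rw [sq_abs] at h1
      calc (u x - u y)^2 ≤ (M * |x - y|)^2 := h1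
        _ = M^2 * |x - y|^2 := by ring
  set L : ℝ≥0∞ := ∫⁻ x in T, ∫⁻ y in T, F x y with hL
  -- Step A : LHS = L.toReal
  have inner_eq : ∀ x : ℝ, (∫ y in a..b, (u x - u y)^2 / |x - y|^2) =
      (∫⁻ y in T, F x y).toReal := by
    intro x
    rw [intervalIntegral.integral_of_le hab.le, integral_eq_lintegral_of_nonneg_ae]
    · exact Filter.Eventually.of_forall fun y => div_nonneg (sq_nonneg _) (sq_nonneg _)
    · exact (by fun_prop : Measurable fun y => (u x - u y)^2 / |x - y|^2).aestronglyMeasurable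
  have stepA : (∫ x in a..b, ∫ y in a..b, (u x - u y)^2 / |x - y|^2) = L.toReal := by
    simp only [inner_eq]
    rw [intervalIntegral.integral_of_le hab.le, hL]
    apply integral_toReal
    · exact (hFm.lintegral_prod_right).aemeasurable
    · filter_upwards [ae_restrict_mem measurableSet_Ioc] with x hx
      have hbd : (∫⁻ y in T, F x y) ≤ ENNReal.ofReal (M^2) * volume T := by
        calc (∫⁻ y in T, F x y) ≤ ∫⁻ _ in T, ENNReal.ofReal (M^2) := by
              apply lintegral_mono_ae
              filter_upwards [ae_restrict_mem measurableSet_Ioc] with y hy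
              exact hFbd x (Set.Ioc_subset_Icc_self hx) y (Set.Ioc_subset_Icc_self hy)
          _ = ENNReal.ofReal (M^2) * volume T := by rw [setLIntegral_const]
      refine lt_of_le_of_lt hbd ?_
      rw [hT, Real.volume_Ioc]
      exact ENNReal.mul_lt_top ENNReal.ofReal_lt_top ENNReal.ofReal_lt_top
  -- split functions
  set P : ℝ → ℝ → ℝ≥0∞ := fun x y => if 0 < x - y ∧ x - y ≤ δ then F x y else 0 with hP
  set Q : ℝ → ℝ → ℝ≥0∞ := fun x y => if δ < x - y then F x y else 0 with hQ
  have hPm : Measurable (Function.uncurry P) := by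
    simp only [hP]
    unfold Function.uncurry
    exact Measurable.ite ((measurableSet_Ioc (a := (0:ℝ)) (b := δ)).preimage (by fun_prop))
      hFm measurable_const
  have hQm : Measurable (Function.uncurry Q) := by
    simp only [hQ]
    unfold Function.uncurry
    exact Measurable.ite ((measurableSet_Ioi (a := δ)).preimage (by fun_prop))
      hFm measurable_const
  have hFsymm : ∀ x y, F x y = F y x := by
    intro x y
    simp only [hF]
    rw [abs_sub_comm, show (u x - u y)^2 = (u y - u x)^2 by ring]
  have hptsplit : ∀ x y, F x y ≤ P x y + P y x + (Q x y + Q y x) := by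
    intro x y
    rcases lt_trichotomy x y with h | h | h
    · rw [hFsymm]
      by_cases hd : y - x ≤ δ
      · have heq : P y x = F y x := if_pos ⟨by linarith, hd⟩
        calc F y x = P y x := heq.symm
          _ ≤ P x y + P y x := le_add_self
          _ ≤ _ := le_self_add
      · have heq : Q y x = F y x := if_pos (by push_neg at hd; linarith)
        calc F y x = Q y x := heq.symm
          _ ≤ Q x y + Q y x := le_add_self
          _ ≤ _ := le_add_self
    · subst h
      have : F x x = 0 := by simp [hF]
      rw [this]; exact zero_le
    · by_cases hd : x - y ≤ δ
      · have heq : P x y = F x y := if_pos ⟨by linarith, hd⟩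
        calc F x y = P x y := heq.symm
          _ ≤ P x y + P y x := le_self_add
          _ ≤ _ := le_self_add
      · have heq : Q x y = F x y := if_pos (by push_neg at hd; linarith)
        calc F x y = Q x y := heq.symm
          _ ≤ Q x y + Q y x := le_self_add
          _ ≤ _ := le_add_self
  have hPm' : Measurable (Function.uncurry fun x y => P y x) := hPm.comp measurable_swap
  have hQm' : Measurable (Function.uncurry fun x y => Q y x) := hQm.comp measurable_swap
  have swapP : (∫⁻ x in T, ∫⁻ y in T, P y x) = ∫⁻ x in T, ∫⁻ y in T, P x y :=
    lintegral_lintegral_swap hPm'.aemeasurable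
  have swapQ : (∫⁻ x in T, ∫⁻ y in T, Q y x) = ∫⁻ x in T, ∫⁻ y in T, Q x y :=
    lintegral_lintegral_swap hQm'.aemeasurable
  have hLsplit : L ≤ 2 * (∫⁻ x in T, ∫⁻ y in T, P x y) + 2 * (∫⁻ x in T, ∫⁻ y in T, Q x y) := by
    have hmPx : ∀ x : ℝ, Measurable fun y => P x y := fun x => hPm.of_uncurry_left
    have hmPy : ∀ x : ℝ, Measurable fun y => P y x := fun x => hPm'.of_uncurry_left
    have hmQx : ∀ x : ℝ, Measurable fun y => Q x y := fun x => hQm.of_uncurry_left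
    have inner : ∀ x, (∫⁻ y in T, (P x y + P y x + (Q x y + Q y x))) =
        (∫⁻ y in T, P x y) + (∫⁻ y in T, P y x) + ((∫⁻ y in T, Q x y) + (∫⁻ y in T, Q y x)) := by
      intro x
      rw [lintegral_add_left (f := fun y => P x y + P y x) ((hmPx x).add (hmPy x)), lintegral_add_left (hmPx x),
        lintegral_add_left (hmQx x)]
    have hmIPx : Measurable fun x => ∫⁻ y in T, P x y := hPm.lintegral_prod_right
    have hmIPy : Measurable fun x => ∫⁻ y in T, P y x := hPm'.lintegral_prod_right
    have hmIQx : Measurable fun x => ∫⁻ y in T, Q x y := hQm.lintegral_prod_right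
    calc L ≤ ∫⁻ x in T, ∫⁻ y in T, (P x y + P y x + (Q x y + Q y x)) :=
          lintegral_mono fun x => lintegral_mono fun y => hptsplit x y
      _ = (∫⁻ x in T, ∫⁻ y in T, P x y) + (∫⁻ x in T, ∫⁻ y in T, P y x) +
          ((∫⁻ x in T, ∫⁻ y in T, Q x y) + (∫⁻ x in T, ∫⁻ y in T, Q y x)) := by
        rw [lintegral_congr inner, lintegral_add_left (f := fun x => (∫⁻ y in T, P x y) + ∫⁻ y in T, P y x) (hmIPx.add hmIPy),
          lintegral_add_left hmIPx, lintegral_add_left hmIQx]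
      _ = 2 * (∫⁻ x in T, ∫⁻ y in T, P x y) + 2 * (∫⁻ x in T, ∫⁻ y in T, Q x y) := by
        rw [swapP, swapQ]; ring
  set GT : ℝ → ℝ≥0∞ := T.indicator G with hGT
  have hGTm : Measurable GT := hGm.indicator measurableSet_Ioc
  have hGTne : ∀ s, GT s ≠ ⊤ := by
    intro s
    rw [hGT]
    by_cases h : s ∈ T
    · rw [Set.indicator_of_mem h]; exact ENNReal.ofReal_ne_top
    · rw [Set.indicator_of_notMem h]; exact ENNReal.zero_ne_top
  have hGTB : (∫⁻ s, GT s) = B' := by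
    rw [hGT, lintegral_indicator measurableSet_Ioc, hB']
  have hNear : (∫⁻ x in T, ∫⁻ y in T, P x y) ≤ 4 * ENNReal.ofReal δ * B' := by
    set J : ℝ → ℝ → ℝ → ℝ≥0∞ := fun x y s =>
      if y < s ∧ s < x then ENNReal.ofReal ((x - s) ^ ((1:ℝ)/2)) * GT s else 0 with hJ
    set Φ : ℝ → ℝ → ℝ → ℝ≥0∞ := fun x y s =>
      if x - δ ≤ y ∧ y < x then ENNReal.ofReal (2*(x - y) ^ (-(3:ℝ)/2)) * J x y s else 0 with hΦ
    set K : ℝ → ℝ → ℝ≥0∞ := fun x s => if x - δ < s ∧ s < x then GT s else 0 with hK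
    have hΦm : ∀ x : ℝ, Measurable (Function.uncurry fun y s => Φ x y s) := by
      intro x
      simp only [hΦ, hJ]
      unfold Function.uncurry
      apply Measurable.ite
      · exact (measurableSet_Ico (a := x - δ) (b := x)).preimage measurable_fst
      · apply Measurable.mul
        · fun_prop
        · apply Measurable.ite
          · exact (measurableSet_lt measurable_fst measurable_snd).inter
              ((measurableSet_Iio (a := x)).preimage measurable_snd)
          · exact ((by fun_prop :
                Measurable fun p : ℝ×ℝ => ENNReal.ofReal ((x - p.2) ^ ((1:ℝ)/2)))).mul
              (hGTm.comp measurable_snd)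
          · fun_prop
      · fun_prop
    -- Step 1: pointwise bound and relaxation for x ∈ T
    have step1 : ∀ x ∈ T, (∫⁻ y in T, P x y) ≤ ∫⁻ y, ∫⁻ s, Φ x y s := by
      intro x hx
      have hR : ∀ y ∈ T, P x y ≤ ∫⁻ s, Φ x y s := by
        intro y hy
        by_cases hcond : 0 < x - y ∧ x - y ≤ δ
        · have hyx : y < x := by linarith [hcond.1]
          have hwin : x - δ ≤ y ∧ y < x := ⟨by linarith [hcond.2], hyx⟩
          have hPF : P x y = F x y := if_pos hcond
          have hΦeq : ∀ s, Φ x y s =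
              ENNReal.ofReal (2*(x - y) ^ (-(3:ℝ)/2)) * J x y s := fun s => if_pos hwin
          have hJint : (∫⁻ s, J x y s) =
              ∫⁻ s in Set.Ioo y x, ENNReal.ofReal ((x - s) ^ ((1:ℝ)/2) * (w s)^2) := by
            have e1 : (∫⁻ s, J x y s) =
                ∫⁻ s, (Set.Ioo y x).indicator
                  (fun s => ENNReal.ofReal ((x - s) ^ ((1:ℝ)/2)) * GT s) s := by
              apply lintegral_congr fun s => ?_
              by_cases hmem : s ∈ Set.Ioo y x
              · rw [Set.indicator_of_mem hmem]
                exact if_pos ⟨hmem.1, hmem.2⟩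
              · rw [Set.indicator_of_notMem hmem]
                apply if_neg
                intro hcon
                exact hmem ⟨hcon.1, hcon.2⟩
            rw [e1, lintegral_indicator measurableSet_Ioo]
            apply setLIntegral_congr_fun measurableSet_Ioo
            intro s hs; beta_reduce
            have hsT : s ∈ T := ⟨lt_trans hy.1 hs.1, le_trans hs.2.le hx.2⟩
            rw [hGT, Set.indicator_of_mem hsT, hG]
            rw [← ENNReal.ofReal_mul (Real.rpow_nonneg (by linarith [hs.2]) _)]
          calc P x y = F x y := hPF
            _ = ENNReal.ofReal ((∫ s in y..x, w s)^2 / |x - y|^2) := by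
                simp only [hF]
                rw [hftc x (Set.Ioc_subset_Icc_self hx) y (Set.Ioc_subset_Icc_self hy)]
            _ ≤ ENNReal.ofReal (2*(x - y) ^ (-(3:ℝ)/2)) *
                ∫⁻ s in Set.Ioo y x, ENNReal.ofReal ((x - s) ^ ((1:ℝ)/2) * (w s)^2) :=
                ptwise w hw hyx
            _ = ENNReal.ofReal (2*(x - y) ^ (-(3:ℝ)/2)) * ∫⁻ s, J x y s := by rw [hJint]
            _ = ∫⁻ s, Φ x y s := by
                rw [← lintegral_const_mul' _ _ ENNReal.ofReal_ne_top]
                exact lintegral_congr fun s => (hΦeq s).symm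
        · have : P x y = 0 := if_neg hcond
          rw [this]; exact zero_le
      calc (∫⁻ y in T, P x y) ≤ ∫⁻ y in T, ∫⁻ s, Φ x y s := by
            apply lintegral_mono_ae
            filter_upwards [ae_restrict_mem measurableSet_Ioc] with y hy
            exact hR y hy
        _ ≤ ∫⁻ y, ∫⁻ s, Φ x y s := lintegral_mono' Measure.restrict_le_self le_rfl
    -- Step 2+3: swap inner integrals and bound, for each x
    have step3 : ∀ x : ℝ, (∫⁻ y, ∫⁻ s, Φ x y s) ≤ ∫⁻ s, 4 * K x s := by
      intro x
      rw [lintegral_lintegral_swap (hΦm x).aemeasurable]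
      apply lintegral_mono fun s => ?_
      by_cases hsx : s < x
      · have hΦy : ∀ y, Φ x y s =
            (Set.Ico (x - δ) s).indicator (fun y => ENNReal.ofReal (2*(x - y) ^ (-(3:ℝ)/2))) y *
              (ENNReal.ofReal ((x - s) ^ ((1:ℝ)/2)) * GT s) := by
          intro y
          by_cases h1 : x - δ ≤ y ∧ y < x
          · by_cases h2 : y < s
            · have hmem : y ∈ Set.Ico (x - δ) s := ⟨h1.1, h2⟩
              rw [Set.indicator_of_mem hmem]
              have : J x y s = ENNReal.ofReal ((x - s) ^ ((1:ℝ)/2)) * GT s := if_pos ⟨h2, hsx⟩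
              rw [hΦ]
              simp only
              rw [if_pos h1, this]
            · have hmem : y ∉ Set.Ico (x - δ) s := fun hc => h2 hc.2
              rw [Set.indicator_of_notMem hmem, zero_mul]
              have : J x y s = 0 := if_neg (fun hc => h2 hc.1)
              rw [hΦ]; simp only; rw [if_pos h1, this, mul_zero]
          · have hmem : y ∉ Set.Ico (x - δ) s := by
              intro hc
              exact h1 ⟨hc.1, lt_trans hc.2 hsx⟩
            rw [Set.indicator_of_notMem hmem, zero_mul]
            rw [hΦ]; simp only; rw [if_neg h1]
        rw [lintegral_congr hΦy,
          lintegral_mul_const' _ _ (ENNReal.mul_ne_top ENNReal.ofReal_ne_top (hGTne s)),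
          lintegral_indicator measurableSet_Ico]
        by_cases hs2 : x - δ < s
        · have hKs : K x s = GT s := if_pos ⟨hs2, hsx⟩
          rw [hKs]
          calc (∫⁻ y in Set.Ico (x - δ) s, ENNReal.ofReal (2*(x - y) ^ (-(3:ℝ)/2))) *
                (ENNReal.ofReal ((x - s) ^ ((1:ℝ)/2)) * GT s)
              ≤ ENNReal.ofReal (4*(x - s) ^ (-(1:ℝ)/2)) *
                (ENNReal.ofReal ((x - s) ^ ((1:ℝ)/2)) * GT s) :=
                mul_le_mul_left (nearY x s δ hδ hsx) _
            _ = (ENNReal.ofReal (4*(x - s) ^ (-(1:ℝ)/2)) *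
                  ENNReal.ofReal ((x - s) ^ ((1:ℝ)/2))) * GT s := by ring
            _ = 4 * GT s := by
                have hxs : (0:ℝ) < x - s := by linarith
                rw [← ENNReal.ofReal_mul (by positivity)]
                congr 1
                rw [mul_assoc, ← Real.rpow_add (by linarith : (0:ℝ) < x - s)]
                norm_num
        · have hemp : Set.Ico (x - δ) s = ∅ := Set.Ico_eq_empty (by linarith)
          rw [hemp]
          simp
      · have hΦ0 : ∀ y, Φ x y s = 0 := by
          intro y
          rw [hΦ]; simp only
          by_cases h1 : x - δ ≤ y ∧ y < x
          · rw [if_pos h1]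
            have : J x y s = 0 := if_neg (fun hc => hsx hc.2)
            rw [this, mul_zero]
          · rw [if_neg h1]
        rw [lintegral_congr hΦ0]
        simp
    -- Step 4-7: outer integration
    have hKm : Measurable (Function.uncurry fun x s => (4:ℝ≥0∞) * K x s) := by
      simp only [hK]
      unfold Function.uncurry
      apply Measurable.const_mul
      apply Measurable.ite
      · exact (measurableSet_lt (by fun_prop) measurable_snd).inter
          (measurableSet_lt measurable_snd measurable_fst)
      · exact hGTm.comp measurable_snd
      · exact measurable_const
    calc (∫⁻ x in T, ∫⁻ y in T, P x y) ≤ ∫⁻ x in T, ∫⁻ s, 4 * K x s := by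
          apply lintegral_mono_ae
          filter_upwards [ae_restrict_mem measurableSet_Ioc] with x hx
          exact le_trans (step1 x hx) (step3 x)
      _ = ∫⁻ s, ∫⁻ x in T, 4 * K x s := lintegral_lintegral_swap hKm.aemeasurable
      _ ≤ ∫⁻ s, 4 * (GT s * ENNReal.ofReal δ) := by
          apply lintegral_mono fun s => ?_
          rw [lintegral_const_mul' _ _ (by simp : (4:ℝ≥0∞) ≠ ⊤)]
          apply mul_le_mul_right
          have hKb : ∀ x, K x s ≤ (Set.Ioo s (s + δ)).indicator (fun _ => GT s) x := by
            intro x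
            rw [hK]; simp only
            by_cases h : x - δ < s ∧ s < x
            · have hmem : x ∈ Set.Ioo s (s + δ) := Set.mem_Ioo.mpr ⟨h.2, by linarith [h.1]⟩
              rw [if_pos h, Set.indicator_of_mem hmem]
            · rw [if_neg h]; exact zero_le
          calc (∫⁻ x in T, K x s) ≤ ∫⁻ x in T, (Set.Ioo s (s + δ)).indicator (fun _ => GT s) x :=
                lintegral_mono fun x => hKb x
            _ ≤ ∫⁻ x, (Set.Ioo s (s + δ)).indicator (fun _ => GT s) x :=
                lintegral_mono' Measure.restrict_le_self le_rfl
            _ = GT s * volume (Set.Ioo s (s + δ)) :=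
                lintegral_indicator_const measurableSet_Ioo _
            _ = GT s * ENNReal.ofReal δ := by
                rw [Real.volume_Ioo]
                congr 1
                ring_nf
      _ = 4 * ENNReal.ofReal δ * B' := by
          rw [← hGTB, ← lintegral_const_mul' (4 * ENNReal.ofReal δ) GT
            (ENNReal.mul_ne_top (by simp) ENNReal.ofReal_ne_top)]
          exact lintegral_congr fun s => by ring
  have hFar : (∫⁻ x in T, ∫⁻ y in T, Q x y) ≤ 4 * ENNReal.ofReal (1/δ) * A' := by
    set κ : ℝ → ℝ → ℝ≥0∞ := fun x y => if δ < x - y then ENNReal.ofReal (((x - y)^2)⁻¹) else 0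
      with hκ
    have hκm : Measurable (Function.uncurry κ) := by
      simp only [hκ]; unfold Function.uncurry
      exact Measurable.ite ((measurableSet_Ioi (a := δ)).preimage (by fun_prop))
        (by fun_prop) measurable_const
    have hQbd : ∀ x y, Q x y ≤ 2 * U x * κ x y + 2 * U y * κ x y := by
      intro x y
      by_cases h : δ < x - y
      · have hQeq : Q x y = F x y := if_pos h
        have hκeq : κ x y = ENNReal.ofReal (((x - y)^2)⁻¹) := if_pos h
        rw [hQeq, hκeq]
        have hFeq : F x y = ENNReal.ofReal ((u x - u y)^2) * ENNReal.ofReal (((x - y)^2)⁻¹) := by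
          simp only [hF]
          rw [div_eq_mul_inv, sq_abs, ENNReal.ofReal_mul (sq_nonneg _)]
        rw [hFeq, ← add_mul]
        apply mul_le_mul_left
        calc ENNReal.ofReal ((u x - u y)^2)
            ≤ ENNReal.ofReal (2*(u x)^2 + 2*(u y)^2) :=
              ENNReal.ofReal_le_ofReal (by nlinarith [sq_nonneg (u x + u y)])
          _ = 2 * U x + 2 * U y := by
              rw [ENNReal.ofReal_add (by positivity) (by positivity),
                ENNReal.ofReal_mul (by norm_num : (0:ℝ) ≤ 2),
                ENNReal.ofReal_mul (by norm_num : (0:ℝ) ≤ 2), ENNReal.ofReal_ofNat]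
      · have hQeq : Q x y = 0 := if_neg h
        rw [hQeq]; exact zero_le
    have hUκ1m : Measurable (Function.uncurry fun x y => 2 * U x * κ x y) :=
      ((hUm.comp measurable_fst).const_mul 2).mul hκm
    have hUκ2m : Measurable (Function.uncurry fun x y => 2 * U y * κ x y) :=
      ((hUm.comp measurable_snd).const_mul 2).mul hκm
    have hk1 : ∀ x : ℝ, (∫⁻ y in T, κ x y) ≤ ENNReal.ofReal (1/δ) := fun x =>
      kern_left δ hδ a b x
    have hk2 : ∀ y : ℝ, (∫⁻ x in T, κ x y) ≤ ENNReal.ofReal (1/δ) := fun y =>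
      kern_right δ hδ a b y
    have hne : ∀ t : ℝ, (2 : ℝ≥0∞) * U t ≠ ⊤ :=
      fun t => ENNReal.mul_ne_top (by simp) ENNReal.ofReal_ne_top
    calc (∫⁻ x in T, ∫⁻ y in T, Q x y)
        ≤ ∫⁻ x in T, ∫⁻ y in T, (2 * U x * κ x y + 2 * U y * κ x y) :=
          lintegral_mono fun x => lintegral_mono fun y => hQbd x y
      _ = (∫⁻ x in T, ∫⁻ y in T, 2 * U x * κ x y) + ∫⁻ x in T, ∫⁻ y in T, 2 * U y * κ x y := by
          have inner : ∀ x, (∫⁻ y in T, (2 * U x * κ x y + 2 * U y * κ x y)) =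
              (∫⁻ y in T, 2 * U x * κ x y) + ∫⁻ y in T, 2 * U y * κ x y := fun x => by
            rw [lintegral_add_left hUκ1m.of_uncurry_left]
          rw [lintegral_congr inner, lintegral_add_left hUκ1m.lintegral_prod_right]
      _ ≤ 2 * ENNReal.ofReal (1/δ) * A' + 2 * ENNReal.ofReal (1/δ) * A' := by
          apply add_le_add
          · calc (∫⁻ x in T, ∫⁻ y in T, 2 * U x * κ x y)
                = ∫⁻ x in T, 2 * U x * ∫⁻ y in T, κ x y := by
                  apply lintegral_congr fun x => ?_
                  rw [lintegral_const_mul' _ _ (hne x)]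
              _ ≤ ∫⁻ x in T, 2 * U x * ENNReal.ofReal (1/δ) :=
                  lintegral_mono fun x => mul_le_mul_right (hk1 x) _
              _ = 2 * ENNReal.ofReal (1/δ) * A' := by
                  rw [hA']
                  rw [← lintegral_const_mul' (2 * ENNReal.ofReal (1/δ)) U
                    (ENNReal.mul_ne_top (by simp) ENNReal.ofReal_ne_top)]
                  exact lintegral_congr fun t => by ring
          · calc (∫⁻ x in T, ∫⁻ y in T, 2 * U y * κ x y)
                = ∫⁻ y in T, ∫⁻ x in T, 2 * U y * κ x y :=
                  lintegral_lintegral_swap hUκ2m.aemeasurable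
              _ = ∫⁻ y in T, 2 * U y * ∫⁻ x in T, κ x y := by
                  apply lintegral_congr fun y => ?_
                  rw [lintegral_const_mul' _ _ (hne y)]
              _ ≤ ∫⁻ y in T, 2 * U y * ENNReal.ofReal (1/δ) :=
                  lintegral_mono fun y => mul_le_mul_right (hk2 y) _
              _ = 2 * ENNReal.ofReal (1/δ) * A' := by
                  rw [hA']
                  rw [← lintegral_const_mul' (2 * ENNReal.ofReal (1/δ)) U
                    (ENNReal.mul_ne_top (by simp) ENNReal.ofReal_ne_top)]
                  exact lintegral_congr fun t => by ring
      _ = 4 * ENNReal.ofReal (1/δ) * A' := by ring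
  -- assemble
  have hfin : L ≤ ENNReal.ofReal (8*δ*B + (8/δ)*A) := by
    calc L ≤ 2 * (4 * ENNReal.ofReal δ * B') + 2 * (4 * ENNReal.ofReal (1/δ) * A') := by
          refine le_trans hLsplit (add_le_add ?_ ?_) <;> exact mul_le_mul_right (by assumption) _
      _ = ENNReal.ofReal (8*δ*B) + ENNReal.ofReal ((8/δ)*A) := by
          rw [hA'', hB'']
          have e1 : (2:ℝ≥0∞) * (4 * ENNReal.ofReal δ * ENNReal.ofReal B) =
              ENNReal.ofReal (8*δ*B) := by
            rw [← ENNReal.ofReal_ofNat 2, ← ENNReal.ofReal_ofNat 4,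
              ← ENNReal.ofReal_mul (by norm_num : (0:ℝ) ≤ 4),
              ← ENNReal.ofReal_mul (by positivity : (0:ℝ) ≤ 4 * δ),
              ← ENNReal.ofReal_mul (by norm_num : (0:ℝ) ≤ 2)]
            congr 1; ring
          have e2 : (2:ℝ≥0∞) * (4 * ENNReal.ofReal (1/δ) * ENNReal.ofReal A) =
              ENNReal.ofReal ((8/δ)*A) := by
            rw [← ENNReal.ofReal_ofNat 2, ← ENNReal.ofReal_ofNat 4,
              ← ENNReal.ofReal_mul (by norm_num : (0:ℝ) ≤ 4),
              ← ENNReal.ofReal_mul (by positivity : (0:ℝ) ≤ 4 * (1/δ)),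
              ← ENNReal.ofReal_mul (by norm_num : (0:ℝ) ≤ 2)]
            congr 1; field_simp; ring
          rw [e1, e2]
      _ = ENNReal.ofReal (8*δ*B + (8/δ)*A) := by
          rw [ENNReal.ofReal_add (by positivity) (by positivity)]
  rw [stepA]
  exact ENNReal.toReal_le_of_le_ofReal (by positivity) hfin

/-- Gagliardo–Nirenberg type estimate for the Aronszajn–Slobodeckij `H^{1/2}` seminorm
(Lemma 3.4): there is a constant `C`, independent of the interval `(a,b)` and of `v`, with
`|v|²_{H^{1/2}(a,b)} ≤ C² ‖v‖_{L²(a,b)} ‖v'‖_{L²(a,b)}` for all `v ∈ H¹(a,b)`. -/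
theorem seminorm_half_interpolation :
    ∃ C : ℝ, 0 < C ∧ ∀ (a b : ℝ), a < b → ∀ (v v' : ℝ → ℝ),
      (∀ x ∈ Set.Icc a b, HasDerivAt v (v' x) x) → ContinuousOn v' (Set.Icc a b) →
      (∫ x in a..b, ∫ y in a..b, (v x - v y) ^ 2 / |x - y| ^ 2) ≤
        C ^ 2 * (∫ x in a..b, (v x) ^ 2) ^ ((1:ℝ)/2) *
          (∫ x in a..b, (v' x) ^ 2) ^ ((1:ℝ)/2) := by
  refine ⟨4, by norm_num, ?_⟩
  intro a b hab v v' hderiv hcont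
  -- clamp
  set c : ℝ → ℝ := fun t => max a (min b t) with hcdef
  have hccont : Continuous c := continuous_const.max (continuous_const.min continuous_id)
  have hcmem : ∀ t, c t ∈ Set.Icc a b :=
    fun t => ⟨le_max_left _ _, max_le hab.le (min_le_left _ _)⟩
  have hcid : ∀ t ∈ Set.Icc a b, c t = t := by
    intro t ht
    rw [hcdef]
    simp only
    rw [min_eq_right ht.2, max_eq_right ht.1]
  set u : ℝ → ℝ := v ∘ c with hudef
  set w : ℝ → ℝ := v' ∘ c with hwdef
  have hvcont : ContinuousOn v (Set.Icc a b) :=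
    fun x hx => ((hderiv x hx).continuousAt).continuousWithinAt
  have hu : Continuous u := hvcont.comp_continuous hccont hcmem
  have hw : Continuous w := hcont.comp_continuous hccont hcmem
  have hueq : ∀ t ∈ Set.Icc a b, u t = v t := fun t ht => by
    rw [hudef]; simp only [Function.comp_apply, hcid t ht]
  have hweq : ∀ t ∈ Set.Icc a b, w t = v' t := fun t ht => by
    rw [hwdef]; simp only [Function.comp_apply, hcid t ht]
  have huIcc : ∀ x ∈ Set.Icc a b, ∀ y ∈ Set.Icc a b, Set.uIcc y x ⊆ Set.Icc a b := by
    intro x hx y hy s hs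
    exact ⟨le_trans (le_min hy.1 hx.1) hs.1, le_trans hs.2 (max_le hy.2 hx.2)⟩
  have hftc : ∀ x ∈ Set.Icc a b, ∀ y ∈ Set.Icc a b, u x - u y = ∫ s in y..x, w s := by
    intro x hx y hy
    rw [hueq x hx, hueq y hy]
    have h1 : (∫ s in y..x, w s) = ∫ s in y..x, v' s :=
      intervalIntegral.integral_congr (fun s hs => hweq s (huIcc x hx y hy hs))
    rw [h1]
    exact (intervalIntegral.integral_eq_sub_of_hasDerivAt
      (fun t ht => hderiv t (huIcc x hx y hy ht))
      ((hcont.mono (huIcc x hx y hy)).intervalIntegrable)).symm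
  -- replace v by u in all integrals
  have hIccuIcc : Set.uIcc a b = Set.Icc a b := Set.uIcc_of_le hab.le
  have hLHS : (∫ x in a..b, ∫ y in a..b, (v x - v y) ^ 2 / |x - y| ^ 2) =
      ∫ x in a..b, ∫ y in a..b, (u x - u y) ^ 2 / |x - y| ^ 2 := by
    apply intervalIntegral.integral_congr
    intro x hx
    rw [hIccuIcc] at hx
    apply intervalIntegral.integral_congr
    intro y hy
    rw [hIccuIcc] at hy
    beta_reduce
    rw [hueq x hx, hueq y hy]
  have hAeq : (∫ x in a..b, (v x) ^ 2) = ∫ x in a..b, (u x) ^ 2 := by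
    apply intervalIntegral.integral_congr
    intro x hx; rw [hIccuIcc] at hx; beta_reduce; rw [hueq x hx]
  have hBeq : (∫ x in a..b, (v' x) ^ 2) = ∫ x in a..b, (w x) ^ 2 := by
    apply intervalIntegral.integral_congr
    intro x hx; rw [hIccuIcc] at hx; beta_reduce; rw [hweq x hx]
  rw [hLHS, hAeq, hBeq]
  set A : ℝ := ∫ x in a..b, (u x)^2 with hA
  set B : ℝ := ∫ x in a..b, (w x)^2 with hB
  set I : ℝ := ∫ x in a..b, ∫ y in a..b, (u x - u y)^2 / |x - y|^2 with hI
  have hA0 : 0 ≤ A := intervalIntegral.integral_nonneg hab.le (fun x _ => sq_nonneg _)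
  have hB0 : 0 ≤ B := intervalIntegral.integral_nonneg hab.le (fun x _ => sq_nonneg _)
  have hmaster : ∀ δ : ℝ, 0 < δ → I ≤ 8*δ*B + (8/δ)*A :=
    fun δ hδ => master a b hab u w hu hw hftc δ hδ
  have key : I ≤ 16 * Real.sqrt A * Real.sqrt B := by
    rcases eq_or_lt_of_le hA0 with hA1 | hA1
    · -- A = 0
      have hle : I ≤ 0 := by
        by_contra hpos
        push_neg at hpos
        have hδ : 0 < I / (8*B + 8) := by positivity
        have := hmaster _ hδ
        rw [← hA1] at this
        have h2 : 8*(I / (8*B+8))*B + (8/(I / (8*B+8)))*0 = I * (8*B) / (8*B+8) := by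
          field_simp; ring
        rw [h2] at this
        have h3 : I * (8*B) / (8*B+8) < I := by
          rw [div_lt_iff₀ (by positivity)]
          nlinarith
        linarith
      have : 0 ≤ 16 * Real.sqrt A * Real.sqrt B := by positivity
      linarith
    · rcases eq_or_lt_of_le hB0 with hB1 | hB1
      · -- B = 0
        have hle : I ≤ 0 := by
          by_contra hpos
          push_neg at hpos
          have hδ : 0 < (8*A + 8) / I := by positivity
          have := hmaster _ hδ
          rw [← hB1] at this
          have h2 : 8*((8*A+8)/I)*0 + (8/((8*A+8)/I))*A = I * (8*A) / (8*A+8) := by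
            field_simp; ring
          rw [h2] at this
          have h3 : I * (8*A) / (8*A+8) < I := by
            rw [div_lt_iff₀ (by positivity)]
            nlinarith
          linarith
        have : 0 ≤ 16 * Real.sqrt A * Real.sqrt B := by positivity
        linarith
      · -- both positive
        have hsA : 0 < Real.sqrt A := Real.sqrt_pos.mpr hA1
        have hsB : 0 < Real.sqrt B := Real.sqrt_pos.mpr hB1
        have hδ : 0 < Real.sqrt A / Real.sqrt B := by positivity
        have := hmaster _ hδ
        have hAe : A = Real.sqrt A * Real.sqrt A := (Real.mul_self_sqrt hA0).symm
        have hBe : B = Real.sqrt B * Real.sqrt B := (Real.mul_self_sqrt hB0).symm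
        have h2 : 8*(Real.sqrt A / Real.sqrt B)*B + (8/(Real.sqrt A / Real.sqrt B))*A =
            16 * Real.sqrt A * Real.sqrt B := by
          rw [hAe, hBe]
          field_simp
          rw [Real.sqrt_sq hsA.le, Real.sqrt_sq hsB.le]; ring
        rw [h2] at this
        exact this
  calc I ≤ 16 * Real.sqrt A * Real.sqrt B := key
    _ = 4^2 * A ^ ((1:ℝ)/2) * B ^ ((1:ℝ)/2) := by
        rw [Real.sqrt_eq_rpow, Real.sqrt_eq_rpow]
        norm_num
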